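/- In the maximum-matching construction with partial assignment g*: if MFN(g*,x*,y') is feasible, then there exists a feasible flow f = (f_j)_{j∈D} for MFN(g*,x*,y') such that for every client k ∈ D \ D_H, every arc incident to the node k^s carries zero flow of every commodity, i.e., f_j(a) = 0 for all j ∈ D and all arcs a entering or leaving k^s. -/

import Mathlib

/-!
Formalization of statements from "An LP-rounding approach to capacitated facility location".

`F` is the (finite) type of facilities, `D` the type of clients, `U i` the (positive integer)
capacity of facility `i`.  The multi-commodity flow network `MFN(g, x, y)` has nodes
`j^s, j^t` for clients `j` and `i, i'` for facilities `i`; its arcs and capacities are as in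
`MFNArc` / `mfnCap` below.
-/

open scoped BigOperators Classical

/-- Arcs of the multi-commodity flow network `MFN`:
`mid i` is the arc `(i, i')`, `sx j i` is `(j^s, i)`, `gs i j` is `(i, j^s)`,
and `ft i j` is `(i', j^t)`. -/
inductive MFNArc (F D : Type) where
  | mid : F → MFNArc F D
  | sx  : D → F → MFNArc F D
  | gs  : F → D → MFNArc F D
  | ft  : F → D → MFNArc F D
  deriving DecidableEq, Fintype

/-- Nodes of the multi-commodity flow network `MFN`. -/
inductive MFNNode (F D : Type) where
  | src  : D → MFNNode F D
  | fac  : F → MFNNode F D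
  | fac' : F → MFNNode F D
  | sink : D → MFNNode F D
  deriving DecidableEq

variable {F D : Type}

/-- Tail (start node) of an arc. -/
def MFNArc.tail : MFNArc F D → MFNNode F D
  | .mid i => .fac i
  | .sx j _ => .src j
  | .gs i _ => .fac i
  | .ft i _ => .fac' i

/-- Head (end node) of an arc. -/
def MFNArc.head : MFNArc F D → MFNNode F D
  | .mid i => .fac' i
  | .sx _ i => .fac i
  | .gs _ j => .src j
  | .ft _ j => .sink j

variable [Fintype F] [Fintype D]

/-- Capacity of each arc of `MFN(g, x, y)`; the demand of client `j` is
`d j = 1 - ∑ i, g i j`. -/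
noncomputable def mfnCap (U : F → ℕ) (g x : F → D → ℝ) (y : F → ℝ) : MFNArc F D → ℝ
  | .mid i  => y i * ((U i : ℝ) - ∑ j, g i j)
  | .sx j i => x i j
  | .gs i j => g i j
  | .ft i j => y i * (1 - ∑ i', g i' j)

/-- Net outflow of a (single-commodity) flow `f` at node `v`. -/
noncomputable def netOutflow (f : MFNArc F D → ℝ) (v : MFNNode F D) : ℝ :=
  ∑ a ∈ Finset.univ.filter (fun a : MFNArc F D => a.tail = v), f a -
    ∑ a ∈ Finset.univ.filter (fun a : MFNArc F D => a.head = v), f a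

/-- `f = (f_j)_{j ∈ D}` is a feasible multi-commodity flow for `MFN(g, x, y)`:
each `f_j` is nonnegative, conserves flow at every node other than `j^s` and `j^t`,
has net outflow `d j = 1 - ∑ i, g i j` at `j^s`, and the total flow on every arc is
at most its capacity. -/
def IsFeasibleFlow (U : F → ℕ) (g x : F → D → ℝ) (y : F → ℝ)
    (f : D → MFNArc F D → ℝ) : Prop :=
  (∀ j a, 0 ≤ f j a) ∧
  (∀ (j : D) (v : MFNNode F D), v ≠ MFNNode.src j → v ≠ MFNNode.sink j →
      netOutflow (f j) v = 0) ∧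
  (∀ j : D, netOutflow (f j) (MFNNode.src j) = 1 - ∑ i, g i j) ∧
  (∀ a : MFNArc F D, ∑ j, f j a ≤ mfnCap U g x y a)

/-- The multi-commodity flow network `MFN(g, x, y)` is feasible. -/
def MFNFeasible (U : F → ℕ) (g x : F → D → ℝ) (y : F → ℝ) : Prop :=
  ∃ f : D → MFNArc F D → ℝ, IsFeasibleFlow U g x y f

/-- `g` is a valid partial (fractional) assignment of clients to facilities. -/
def ValidAssign (U : F → ℕ) (g : F → D → ℝ) : Prop :=
  (∀ i j, 0 ≤ g i j) ∧ (∀ j, ∑ i, g i j ≤ 1) ∧ (∀ i, ∑ j, g i j ≤ (U i : ℝ))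

/-- Arcs of the residual graph `H` of the fractional `b`-matching `z`: an arc from client
`j` to facility `i ∈ I` when `z i j < 2 * x i j`, and an arc from facility `i ∈ I` to
client `j` when `z i j > 0`. -/
def HStep (I : Finset F) (z x : F → D → ℝ) : F ⊕ D → F ⊕ D → Prop
  | Sum.inr j, Sum.inl i => i ∈ I ∧ z i j < 2 * x i j
  | Sum.inl i, Sum.inr j => i ∈ I ∧ 0 < z i j
  | _, _ => False

/-- Client `j` is unsaturated by the fractional matching `z`. -/
def Unsat (I : Finset F) (z : F → D → ℝ) (j : D) : Prop :=
  ∑ i ∈ I, z i j ≠ 1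

/-- Facility `i` belongs to `I_H`: it is reachable in `H` from some unsaturated client. -/
def InIH (I : Finset F) (z x : F → D → ℝ) (i : F) : Prop :=
  ∃ k : D, Unsat I z k ∧ Relation.ReflTransGen (HStep I z x) (Sum.inr k) (Sum.inl i)

/-- Client `j` belongs to `D_H`: it is reachable in `H` from some unsaturated client
(every unsaturated client itself belongs to `D_H`). -/
def InDH (I : Finset F) (z x : F → D → ℝ) (j : D) : Prop :=
  ∃ k : D, Unsat I z k ∧ Relation.ReflTransGen (HStep I z x) (Sum.inr k) (Sum.inr j)

section Helpers
set_option linter.unusedSectionVars false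

variable {F D : Type} [Fintype F] [Fintype D]

local notation "Arc" => MFNArc F D
local notation "Node" => MFNNode F D

lemma netOutflow_congr {f g : Arc → ℝ} (h : ∀ a, f a = g a) (v : Node) :
    netOutflow f v = netOutflow g v := by
  have : f = g := funext h
  rw [this]

lemma netOutflow_add (f g : Arc → ℝ) (v : Node) :
    netOutflow (fun a => f a + g a) v = netOutflow f v + netOutflow g v := by
  unfold netOutflow
  rw [Finset.sum_add_distrib, Finset.sum_add_distrib]; ring

lemma netOutflow_zero (v : Node) : netOutflow (fun _ => (0:ℝ)) v = 0 := by
  unfold netOutflow; simp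

lemma netOutflow_const_mul (c : ℝ) (f : Arc → ℝ) (v : Node) :
    netOutflow (fun a => c * f a) v = c * netOutflow f v := by
  unfold netOutflow
  rw [← Finset.mul_sum, ← Finset.mul_sum]; ring

lemma netOutflow_single (a : Arc) (v : Node) :
    netOutflow (fun b => if b = a then (1:ℝ) else 0) v =
      (if a.tail = v then (1:ℝ) else 0) - (if a.head = v then (1:ℝ) else 0) := by
  unfold netOutflow
  rw [Finset.sum_ite_eq' _ a (fun _ => (1:ℝ)), Finset.sum_ite_eq' _ a (fun _ => (1:ℝ))]
  simp

/-- Walks in the MFN digraph, as lists of arcs. -/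
inductive IsWalk : MFNNode F D → List (MFNArc F D) → MFNNode F D → Prop
  | nil (v : MFNNode F D) : IsWalk v [] v
  | cons {u w : MFNNode F D} {a : MFNArc F D} {l : List (MFNArc F D)}
      (ha : a.tail = u) (h : IsWalk a.head l w) : IsWalk u (a :: l) w

lemma IsWalk.eq_of_nil {u w : Node} (h : IsWalk u ([] : List Arc) w) : u = w := by
  cases h; rfl

/-- Flow counting multiplicities of arcs in a list. -/
noncomputable def cnt (P : List (MFNArc F D)) : MFNArc F D → ℝ := fun a => (P.count a : ℝ)

lemma cnt_nil : cnt ([] : List Arc) = fun _ => 0 := by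
  funext a; simp [cnt]

lemma cnt_cons (a : Arc) (l : List Arc) :
    ∀ b, cnt (a :: l) b = cnt l b + (if b = a then (1:ℝ) else 0) := by
  intro b
  simp only [cnt, List.count_cons]
  by_cases h : b = a
  · subst h; simp
  · have hab : a ≠ b := fun e => h (Eq.symm e)
    have : (a == b) = false := beq_eq_false_iff_ne.mpr hab
    simp [this, h]

lemma netOutflow_cnt {u w : Node} {P : List Arc} (h : IsWalk u P w) (v : Node) :
    netOutflow (cnt P) v = (if u = v then (1:ℝ) else 0) - (if w = v then (1:ℝ) else 0) := by
  induction h with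
  | nil x =>
      rw [netOutflow_congr (f := cnt ([]:List Arc)) (g := fun _ => (0:ℝ)) (fun a => by simp [cnt])]
      rw [netOutflow_zero]; ring
  | cons ha hw ih =>
      rename_i u' w' a l
      rw [netOutflow_congr (cnt_cons a l), netOutflow_add, ih, netOutflow_single, ha]
      ring

lemma IsWalk.append_split {u w : Node} {P Q : List Arc} (h : IsWalk u (P ++ Q) w) :
    ∃ m, IsWalk u P m ∧ IsWalk m Q w := by
  induction P generalizing u with
  | nil => exact ⟨u, IsWalk.nil u, h⟩
  | cons a l ih =>
      cases h with
      | cons ha h' =>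
          obtain ⟨m, h1, h2⟩ := ih h'
          exact ⟨m, IsWalk.cons ha h1, h2⟩

lemma IsWalk.concat {u w : Node} {P : List Arc} (h : IsWalk u P w) (a : Arc)
    (ha : a.tail = w) : IsWalk u (P ++ [a]) a.head := by
  induction h with
  | nil v => exact IsWalk.cons ha (IsWalk.nil _)
  | cons hb h' ih => exact IsWalk.cons hb (ih ha)

lemma IsWalk.head_last {u w : Node} {P : List Arc} {b : Arc}
    (h : IsWalk u (P ++ [b]) w) : b.head = w := by
  obtain ⟨m, _, h2⟩ := h.append_split
  cases h2 with
  | cons hb h3 => exact h3.eq_of_nil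

/-- If every arc head along a walk avoids a set of nodes, and the start does too,
then every arc tail avoids it. -/
lemma IsWalk.tails_avoid {u w : Node} {P : List Arc} (h : IsWalk u P w)
    (Bad : Node → Prop) (hheads : ∀ a ∈ P, ¬ Bad a.head) (hu : ¬ Bad u) :
    ∀ a ∈ P, ¬ Bad a.tail := by
  induction h with
  | nil => intro a ha; simp at ha
  | cons ha h' ih =>
      rename_i u' w' a l
      intro b hb
      rcases List.mem_cons.mp hb with rfl | hb'
      · rw [ha]; exact hu
      · exact ih (fun c hc => hheads c (List.mem_cons_of_mem _ hc))
          (hheads a (List.mem_cons_self)) b hb'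

/-- Split a list at the first element whose head satisfies `Bad`. -/
lemma first_bad_split (Bad : Node → Prop) :
    ∀ P : List Arc, (∀ a ∈ P, ¬ Bad a.head) ∨
      ∃ P₁ a P₂, P = P₁ ++ a :: P₂ ∧ Bad a.head ∧ ∀ b ∈ P₁, ¬ Bad b.head := by
  intro P
  induction P with
  | nil => left; intro a ha; simp at ha
  | cons a l ih =>
      by_cases hb : Bad a.head
      · right; exact ⟨[], a, l, by simp, hb, by simp⟩
      · rcases ih with h | ⟨P₁, b, P₂, rfl, hb', hP₁⟩
        · left; intro c hc
          rcases List.mem_cons.mp hc with rfl | hc'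
          · exact hb
          · exact h c hc'
        · right
          refine ⟨a :: P₁, b, P₂, by simp, hb', ?_⟩
          intro c hc
          rcases List.mem_cons.mp hc with rfl | hc'
          · exact hb
          · exact hP₁ c hc'

end Helpers
section Decompose
set_option linter.unusedSectionVars false
set_option maxHeartbeats 1000000

variable {F D : Type} [Fintype F] [Fintype D]

local notation "Arc" => MFNArc F D
local notation "Node" => MFNNode F D

lemma exists_pos_of_sum_pos {s : Finset (MFNArc F D)} {g : MFNArc F D → ℝ}
    (h : 0 < ∑ a ∈ s, g a) : ∃ a ∈ s, 0 < g a := by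
  by_contra hc
  push_neg at hc
  exact absurd (Finset.sum_nonpos hc) (not_le.mpr h)

lemma find_walk_aux (g : MFNArc F D → ℝ) (s t : MFNNode F D)
    (hg0 : ∀ a, 0 ≤ g a)
    (hcons : ∀ v, v ≠ s → v ≠ t → netOutflow g v = 0)
    (hnet : 0 < netOutflow g s) :
    ∀ (n : ℕ) (P : List (MFNArc F D)) (u : MFNNode F D),
      Fintype.card (MFNArc F D) + 1 - P.length ≤ n →
      IsWalk s P u → u ≠ t → (∀ a ∈ P, 0 < g a) → P.Nodup →
      (∀ a ∈ P, a.head ≠ t) →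
      ((∃ Q, IsWalk s Q t ∧ Q ≠ [] ∧ (∀ a ∈ Q, 0 < g a) ∧ Q.Nodup ∧
          (∀ a ∈ Q.dropLast, a.head ≠ t)) ∨
       (∃ (u' : MFNNode F D) (C : List (MFNArc F D)), IsWalk u' C u' ∧ C ≠ [] ∧
          (∀ a ∈ C, 0 < g a) ∧ C.Nodup)) := by
  intro n
  induction n with
  | zero =>
      intro P u hn hw hut hpos hnd hheads
      exfalso
      have hlen : P.length ≤ Fintype.card (MFNArc F D) := hnd.length_le_card
      omega
  | succ n ih =>
      intro P u hn hw hut hpos hnd hheads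
      have hin0 : 0 ≤ ∑ a ∈ Finset.univ.filter (fun a : MFNArc F D => a.head = u), g a :=
        Finset.sum_nonneg (fun a _ => hg0 a)
      have hout : 0 < ∑ a ∈ Finset.univ.filter (fun a : MFNArc F D => a.tail = u), g a := by
        by_cases hus : u = s
        · subst hus
          have := hnet
          unfold netOutflow at this
          linarith
        · have hPne : P ≠ [] := by
            intro h; subst h; exact hus hw.eq_of_nil.symm
          obtain ⟨P', b, hPeq⟩ := (List.eq_nil_or_concat P).resolve_left hPne
          rw [List.concat_eq_append] at hPeq
          subst hPeq
          have hbu : b.head = u := hw.head_last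
          have hbP : b ∈ P' ++ [b] := by simp
          have hgb : 0 < g b := hpos b hbP
          have hin : g b ≤ ∑ a ∈ Finset.univ.filter (fun a : MFNArc F D => a.head = u), g a := by
            apply Finset.single_le_sum (fun a _ => hg0 a)
            simp [hbu]
          have hc := hcons u hus hut
          unfold netOutflow at hc
          linarith
      obtain ⟨a, ha, hga⟩ := exists_pos_of_sum_pos hout
      have hat : a.tail = u := by
        simpa using (Finset.mem_filter.mp ha).2
      by_cases hht : a.head = t
      · left
        have hwalk : IsWalk s (P ++ [a]) t := hht ▸ hw.concat a hat
        have hanP : a ∉ P := fun hmem => (hheads a hmem) hht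
        refine ⟨P ++ [a], hwalk, by simp, ?_, ?_, ?_⟩
        · intro b hb
          rcases List.mem_append.mp hb with hb | hb
          · exact hpos b hb
          · simp at hb; subst hb; exact hga
        · rw [List.nodup_append]
          exact ⟨hnd, List.nodup_singleton a, by simp; intro b hb hba; exact hanP (hba ▸ hb)⟩
        · intro b hb
          rw [List.dropLast_concat] at hb
          exact hheads b hb
      · by_cases ham : a ∈ P
        · right
          obtain ⟨P₁, P₂, rfl⟩ := List.append_of_mem ham
          obtain ⟨m, h1, h2⟩ := hw.append_split
          have hmu : m = u := by
            cases h2 with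
            | cons hb h3 => rw [← hb, hat]
          subst hmu
          refine ⟨m, a :: P₂, h2, by simp, ?_, ?_⟩
          · intro b hb
            exact hpos b (by simp [List.mem_append.mpr (Or.inr hb)])
          · exact hnd.sublist (List.sublist_append_right P₁ (a :: P₂))
        · have hwalk : IsWalk s (P ++ [a]) a.head := hw.concat a hat
          apply ih (P ++ [a]) a.head _ hwalk hht _ _ _
          · have : (P ++ [a]).length = P.length + 1 := by simp
            omega
          · intro b hb
            rcases List.mem_append.mp hb with hb | hb
            · exact hpos b hb
            · simp at hb; subst hb; exact hga
          · rw [List.nodup_append]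
            exact ⟨hnd, List.nodup_singleton a, by simp; intro b hb hba; exact ham (hba ▸ hb)⟩
          · intro b hb
            rcases List.mem_append.mp hb with hb | hb
            · exact hheads b hb
            · simp at hb; subst hb; exact hht

lemma find_walk (g : MFNArc F D → ℝ) (s t : MFNNode F D) (hst : s ≠ t)
    (hg0 : ∀ a, 0 ≤ g a)
    (hcons : ∀ v, v ≠ s → v ≠ t → netOutflow g v = 0)
    (hnet : 0 < netOutflow g s) :
    ((∃ Q, IsWalk s Q t ∧ Q ≠ [] ∧ (∀ a ∈ Q, 0 < g a) ∧ Q.Nodup ∧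
        (∀ a ∈ Q.dropLast, a.head ≠ t)) ∨
     (∃ (u' : MFNNode F D) (C : List (MFNArc F D)), IsWalk u' C u' ∧ C ≠ [] ∧
        (∀ a ∈ C, 0 < g a) ∧ C.Nodup)) :=
  find_walk_aux g s t hg0 hcons hnet (Fintype.card (MFNArc F D) + 1) [] s
    (by simp) (IsWalk.nil s) hst (by simp) List.nodup_nil (by simp)

lemma cnt_eq_indicator {P : List (MFNArc F D)} (hnd : P.Nodup) (a : MFNArc F D) :
    cnt P a = if a ∈ P then (1:ℝ) else 0 := by
  by_cases h : a ∈ P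
  · simp [cnt, h, List.count_eq_one_of_mem hnd h]
  · simp [cnt, h, List.count_eq_zero_of_not_mem h]

lemma decompose (s t : MFNNode F D) (hst : s ≠ t) :
    ∀ (N : ℕ) (g : MFNArc F D → ℝ) (v : ℝ),
      (Finset.univ.filter (fun a : MFNArc F D => 0 < g a)).card ≤ N →
      (∀ a, 0 ≤ g a) →
      (∀ u, u ≠ s → u ≠ t → netOutflow g u = 0) →
      netOutflow g s = v → 0 ≤ v →
      ∃ L : List (ℝ × List (MFNArc F D)),
        (∀ p ∈ L, 0 < p.1 ∧ IsWalk s p.2 t ∧ (∀ a ∈ p.2, 0 < g a) ∧ p.2.Nodup ∧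
          (∀ a ∈ p.2.dropLast, a.head ≠ t)) ∧
        (∀ a, (L.map (fun p => p.1 * (p.2.count a : ℝ))).sum ≤ g a) ∧
        (L.map Prod.fst).sum = v := by
  intro N
  induction N with
  | zero =>
      intro g v hcard hg0 hcons hnet hv
      have hg : ∀ a, g a = 0 := by
        intro a
        by_contra h
        have : 0 < g a := lt_of_le_of_ne (hg0 a) (Ne.symm h)
        have : a ∈ Finset.univ.filter (fun a : MFNArc F D => 0 < g a) := by simp [this]
        have := Finset.card_pos.mpr ⟨a, this⟩
        omega
      have hv0 : v = 0 := by
        rw [← hnet, netOutflow_congr hg, netOutflow_zero]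
      exact ⟨[], by simp, by intro a; simpa [hg a] using le_of_eq (rfl : (0:ℝ) = 0), by simp [hv0]⟩
  | succ N ih =>
      intro g v hcard hg0 hcons hnet hv
      rcases hv.eq_or_lt with hv0 | hvpos
      · exact ⟨[], by simp, by intro a; simpa using hg0 a, by simp [← hv0]⟩
      · rcases find_walk g s t hst hg0 hcons (hnet ▸ hvpos) with
          ⟨P, hwalk, hPne, hPpos, hPnd, hPdl⟩ | ⟨u, C, hwalk, hCne, hCpos, hCnd⟩
        · -- path case
          obtain ⟨a₀, ha₀⟩ := List.exists_mem_of_ne_nil P hPne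
          have hne : P.toFinset.Nonempty := ⟨a₀, List.mem_toFinset.mpr ha₀⟩
          set ε := P.toFinset.inf' hne g with hε
          have hεle : ∀ a ∈ P, ε ≤ g a := fun a ha =>
            Finset.inf'_le g (List.mem_toFinset.mpr ha)
          obtain ⟨astar, hastar, hεeq⟩ := Finset.exists_mem_eq_inf' hne g
          have hastarP : astar ∈ P := List.mem_toFinset.mp hastar
          have hεpos : 0 < ε := by rw [hε, hεeq]; exact hPpos astar hastarP
          by_cases hle : v ≤ ε
          · refine ⟨[(v, P)], ?_, ?_, by simp⟩
            · intro p hp; simp at hp; subst hp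
              exact ⟨hvpos, hwalk, hPpos, hPnd, hPdl⟩
            · intro a
              simp only [List.map_cons, List.map_nil, List.sum_cons, List.sum_nil, add_zero]
              have : ((P.count a : ℝ)) = if a ∈ P then (1:ℝ) else 0 := cnt_eq_indicator hPnd a
              rw [this]
              by_cases hmem : a ∈ P
              · simp only [hmem, if_true, mul_one]
                exact le_trans hle (hεle a hmem)
              · simp [hmem, hg0 a]
          · push_neg at hle
            set g' := fun a => g a + (-ε) * cnt P a with hg'
            have hg'val : ∀ a, g' a = g a - ε * (if a ∈ P then (1:ℝ) else 0) := by
              intro b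
              simp only [hg']
              rw [cnt_eq_indicator hPnd b]
              by_cases hmem : b ∈ P
              · simp only [hmem, if_true, mul_one]; ring
              · simp only [hmem, if_false, mul_zero]; ring
            have hg'0 : ∀ a, 0 ≤ g' a := by
              intro a; rw [hg'val]
              by_cases hmem : a ∈ P
              · simp only [hmem, if_true, mul_one, sub_nonneg]; exact hεle a hmem
              · simp [hmem, hg0 a]
            have hg'net : ∀ u', netOutflow g' u' =
                netOutflow g u' + (-ε) * ((if s = u' then (1:ℝ) else 0) - (if t = u' then (1:ℝ) else 0)) := by
              intro u'
              rw [hg', netOutflow_add, netOutflow_const_mul, netOutflow_cnt hwalk]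
            have hg'cons : ∀ u', u' ≠ s → u' ≠ t → netOutflow g' u' = 0 := by
              intro u' h1 h2
              rw [hg'net, hcons u' h1 h2]
              simp [Ne.symm h1, Ne.symm h2]
            have hg'nets : netOutflow g' s = v - ε := by
              rw [hg'net, hnet]
              simp [Ne.symm hst]
              ring
            have hsub : Finset.univ.filter (fun a : MFNArc F D => 0 < g' a) ⊂
                Finset.univ.filter (fun a : MFNArc F D => 0 < g a) := by
              constructor
              · intro a hamem
                simp only [Finset.mem_filter, Finset.mem_univ, true_and] at *
                have := hg'val a
                by_cases hmem : a ∈ P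
                · exact hPpos a hmem
                · rw [hg'val a] at hamem; simpa [hmem] using hamem
              · intro hcontra
                have h1 : astar ∈ Finset.univ.filter (fun a : MFNArc F D => 0 < g a) := by
                  simp [hPpos astar hastarP]
                have h2 := hcontra h1
                simp only [Finset.mem_filter, Finset.mem_univ, true_and] at h2
                rw [hg'val astar] at h2
                simp [hastarP, ← hεeq] at h2
                exact (lt_irrefl (g astar)) (by have := h2 astar hastarP; rwa [hε, hεeq] at this)
            have hcard' : (Finset.univ.filter (fun a : MFNArc F D => 0 < g' a)).card ≤ N := by
              have := Finset.card_lt_card hsub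
              omega
            obtain ⟨L', hL'walks, hL'bound, hL'sum⟩ :=
              ih g' (v - ε) hcard' hg'0 hg'cons hg'nets (by linarith)
            refine ⟨(ε, P) :: L', ?_, ?_, by simp only [List.map_cons, List.sum_cons, hL'sum]; ring⟩
            · intro p hp
              rcases List.mem_cons.mp hp with rfl | hp'
              · exact ⟨hεpos, hwalk, hPpos, hPnd, hPdl⟩
              · obtain ⟨h1, h2, h3, h4, h5⟩ := hL'walks p hp'
                refine ⟨h1, h2, fun a ha => ?_, h4, h5⟩
                have := h3 a ha
                have := hg'val a
                by_cases hmem : a ∈ P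
                · exact hPpos a hmem
                · rw [hg'val a] at *
                  have h6 := h3 a ha
                  rw [hg'val a] at h6
                  simpa [hmem] using h6
            · intro a
              simp only [List.map_cons, List.sum_cons]
              have hb := hL'bound a
              rw [hg'val a] at hb
              have : ((P.count a : ℝ)) = if a ∈ P then (1:ℝ) else 0 := cnt_eq_indicator hPnd a
              rw [this]
              by_cases hmem : a ∈ P
              · simp only [hmem, if_true, mul_one] at *
                linarith
              · simp only [hmem, if_false, mul_zero, zero_add]
                simpa [hmem] using hb
        · -- cycle case
          obtain ⟨a₀, ha₀⟩ := List.exists_mem_of_ne_nil C hCne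
          have hne : C.toFinset.Nonempty := ⟨a₀, List.mem_toFinset.mpr ha₀⟩
          set ε := C.toFinset.inf' hne g with hε
          have hεle : ∀ a ∈ C, ε ≤ g a := fun a ha =>
            Finset.inf'_le g (List.mem_toFinset.mpr ha)
          obtain ⟨astar, hastar, hεeq⟩ := Finset.exists_mem_eq_inf' hne g
          have hastarC : astar ∈ C := List.mem_toFinset.mp hastar
          have hεpos : 0 < ε := by rw [hε, hεeq]; exact hCpos astar hastarC
          set g' := fun a => g a + (-ε) * cnt C a with hg'
          have hg'val : ∀ a, g' a = g a - ε * (if a ∈ C then (1:ℝ) else 0) := by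
            intro b
            simp only [hg']
            rw [cnt_eq_indicator hCnd b]
            by_cases hmem : b ∈ C
            · simp only [hmem, if_true, mul_one]; ring
            · simp only [hmem, if_false, mul_zero]; ring
          have hg'0 : ∀ a, 0 ≤ g' a := by
            intro a; rw [hg'val]
            by_cases hmem : a ∈ C
            · simp only [hmem, if_true, mul_one, sub_nonneg]; exact hεle a hmem
            · simp [hmem, hg0 a]
          have hg'net : ∀ u', netOutflow g' u' = netOutflow g u' := by
            intro u'
            rw [hg', netOutflow_add, netOutflow_const_mul, netOutflow_cnt hwalk]
            ring
          have hsub : Finset.univ.filter (fun a : MFNArc F D => 0 < g' a) ⊂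
              Finset.univ.filter (fun a : MFNArc F D => 0 < g a) := by
            constructor
            · intro a hamem
              simp only [Finset.mem_filter, Finset.mem_univ, true_and] at *
              by_cases hmem : a ∈ C
              · exact hCpos a hmem
              · rw [hg'val a] at hamem; simpa [hmem] using hamem
            · intro hcontra
              have h1 : astar ∈ Finset.univ.filter (fun a : MFNArc F D => 0 < g a) := by
                simp [hCpos astar hastarC]
              have h2 := hcontra h1
              simp only [Finset.mem_filter, Finset.mem_univ, true_and] at h2
              rw [hg'val astar] at h2
              simp [hastarC, ← hεeq] at h2
              exact (lt_irrefl (g astar)) (by have := h2 astar hastarC; rwa [hε, hεeq] at this)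
          have hcard' : (Finset.univ.filter (fun a : MFNArc F D => 0 < g' a)).card ≤ N := by
            have := Finset.card_lt_card hsub
            omega
          obtain ⟨L', hL'walks, hL'bound, hL'sum⟩ :=
            ih g' v hcard' hg'0
              (fun u' h1 h2 => (hg'net u') ▸ hcons u' h1 h2)
              ((hg'net s) ▸ hnet) hv
          refine ⟨L', ?_, ?_, hL'sum⟩
          · intro p hp
            obtain ⟨h1, h2, h3, h4, h5⟩ := hL'walks p hp
            refine ⟨h1, h2, fun a ha => ?_, h4, h5⟩
            have h6 := h3 a ha
            rw [hg'val a] at h6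
            by_cases hmem : a ∈ C
            · exact hCpos a hmem
            · simpa [hmem] using h6
          · intro a
            have hb := hL'bound a
            rw [hg'val a] at hb
            have h7 : ε * (if a ∈ C then (1:ℝ) else 0) ≥ 0 := by
              by_cases hmem : a ∈ C <;> simp [hmem, le_of_lt hεpos]
            linarith

end Decompose
section Small
set_option linter.unusedSectionVars false
set_option maxHeartbeats 1000000

variable {F D : Type} [Fintype F] [Fintype D]

lemma netOutflow_listSum {α : Type} (l : List α) (φ : α → MFNArc F D → ℝ) (v : MFNNode F D) :
    netOutflow (fun a => (l.map (fun p => φ p a)).sum) v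
      = (l.map (fun p => netOutflow (φ p) v)).sum := by
  induction l with
  | nil => simpa using netOutflow_zero v
  | cons p l ih =>
      simp only [List.map_cons, List.sum_cons]
      rw [netOutflow_add (φ p) (fun a => (l.map (fun p => φ p a)).sum), ih]

lemma filter_tail_sink (j : D) :
    Finset.univ.filter (fun a : MFNArc F D => a.tail = MFNNode.sink j) = ∅ := by
  ext a
  simp only [Finset.mem_filter, Finset.mem_univ, true_and, Finset.notMem_empty, iff_false]
  cases a <;> simp [MFNArc.tail]

lemma filter_head_fac (i : F) :
    Finset.univ.filter (fun a : MFNArc F D => a.head = MFNNode.fac i) =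
      Finset.univ.image (fun j : D => MFNArc.sx j i) := by
  ext a
  simp only [Finset.mem_filter, Finset.mem_univ, true_and, Finset.mem_image]
  constructor
  · intro h
    cases a with
    | sx j i' =>
        simp only [MFNArc.head, MFNNode.fac.injEq] at h
        subst h; exact ⟨j, rfl⟩
    | mid i' => simp [MFNArc.head] at h
    | gs i' j => simp [MFNArc.head] at h
    | ft i' j => simp [MFNArc.head] at h
  · rintro ⟨j, rfl⟩; rfl

lemma sum_head_fac (f : MFNArc F D → ℝ) (i : F) :
    ∑ a ∈ Finset.univ.filter (fun a : MFNArc F D => a.head = MFNNode.fac i), f a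
      = ∑ j, f (MFNArc.sx j i) := by
  rw [filter_head_fac, Finset.sum_image]
  intro a _ b _ h
  simpa using h

lemma mem_dropLast_append {α : Type} (l₁ l₂ : List α) (x b : α) (h : b ∈ l₁) :
    b ∈ (l₁ ++ x :: l₂).dropLast := by
  induction l₁ with
  | nil => simp at h
  | cons c l ih =>
      rcases List.mem_cons.mp h with rfl | h'
      · rw [List.cons_append, List.dropLast_cons_of_ne_nil (by simp)]
        exact List.mem_cons_self
      · rw [List.cons_append, List.dropLast_cons_of_ne_nil (by simp)]
        exact List.mem_cons_of_mem _ (ih h')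

end Small
section PerCommodity
set_option linter.unusedSectionVars false
set_option maxHeartbeats 2000000

variable {F D : Type} [Fintype F] [Fintype D]

lemma per_commodity
    (I : Finset F) (z xstar gstar : F → D → ℝ) (U : F → ℕ) (y' : F → ℝ)
    (hgpos : ∀ i k, ¬ InDH I z xstar k → 0 < gstar i k → i ∈ I ∧ ¬ InIH I z xstar i)
    (c : D)
    (hcDH : (1 - ∑ i, gstar i c) ≠ 0 → InDH I z xstar c)
    (hdc0 : 0 ≤ 1 - ∑ i, gstar i c)
    (fc : MFNArc F D → ℝ)
    (hfc0 : ∀ a, 0 ≤ fc a)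
    (hcons : ∀ v, v ≠ MFNNode.src c → v ≠ MFNNode.sink c → netOutflow fc v = 0)
    (hnet : netOutflow fc (MFNNode.src c) = 1 - ∑ i, gstar i c)
    (hcap : ∀ a, fc a ≤ mfnCap U gstar xstar y' a) :
    ∃ fc' : MFNArc F D → ℝ,
      (∀ a, 0 ≤ fc' a) ∧
      (∀ v, v ≠ MFNNode.src c → v ≠ MFNNode.sink c → netOutflow fc' v = 0) ∧
      (netOutflow fc' (MFNNode.src c) = 1 - ∑ i, gstar i c) ∧
      (∀ k, ¬ InDH I z xstar k → ∀ a : MFNArc F D,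
        (a.tail = MFNNode.src k ∨ a.head = MFNNode.src k) → fc' a = 0) ∧
      (∀ j i, fc' (MFNArc.sx j i) ≤ fc (MFNArc.sx j i)) ∧
      (∀ i j, fc' (MFNArc.gs i j) ≤ fc (MFNArc.gs i j)) ∧
      (∀ i, ¬(i ∈ I ∧ ¬ InIH I z xstar i) → fc' (MFNArc.mid i) ≤ fc (MFNArc.mid i)) ∧
      (∀ i j, j ≠ c → fc' (MFNArc.ft i j) = 0) ∧
      (∀ i, fc' (MFNArc.ft i c) ≤ 1 - ∑ i', gstar i' c) ∧
      (∀ i, i ∉ I → fc' (MFNArc.ft i c) ≤ fc (MFNArc.ft i c)) := by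
  by_cases hdc : (1 - ∑ i, gstar i c) = 0
  · refine ⟨fun _ => 0, fun a => le_refl 0, fun v _ _ => netOutflow_zero v, ?_,
      fun k _ a _ => rfl, fun j i => hfc0 _, fun i j => hfc0 _, fun i _ => hfc0 _,
      fun i j _ => rfl, fun i => hdc0, fun i _ => hfc0 _⟩
    rw [netOutflow_zero]
    exact hdc.symm
  · have hdcpos : 0 < 1 - ∑ i, gstar i c := lt_of_le_of_ne hdc0 (Ne.symm hdc)
    have hcdh : InDH I z xstar c := hcDH hdc
    set s : MFNNode F D := MFNNode.src c with hs
    set t : MFNNode F D := MFNNode.sink c with ht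
    have hst : s ≠ t := by simp [hs, ht]
    set Bad : MFNNode F D → Prop := fun v => ∃ k, ¬ InDH I z xstar k ∧ v = MFNNode.src k
      with hBad
    have hsnotbad : ¬ Bad s := by
      rintro ⟨k, hk, he⟩
      rw [hs] at he
      simp only [MFNNode.src.injEq] at he
      exact hk (he ▸ hcdh)
    -- flow into foreign sinks is zero
    have hft0 : ∀ i j, j ≠ c → fc (MFNArc.ft i j) = 0 := by
      intro i j hj
      have hc0 := hcons (MFNNode.sink j) (by simp [hs]) (by simp [ht, hj])
      unfold netOutflow at hc0
      rw [filter_tail_sink j] at hc0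
      simp only [Finset.sum_empty, zero_sub, neg_eq_zero] at hc0
      exact (Finset.sum_eq_zero_iff_of_nonneg (fun a _ => hfc0 a)).mp hc0
        (MFNArc.ft i j) (Finset.mem_filter.mpr ⟨Finset.mem_univ _, rfl⟩)
    -- decompose fc into walks
    obtain ⟨L, hLw, hLb, hLs⟩ := decompose s t hst
      ((Finset.univ.filter (fun a : MFNArc F D => 0 < fc a)).card) fc
      (1 - ∑ i, gstar i c) le_rfl hfc0 hcons hnet hdc0
    -- modify each walk
    have walkmod : ∀ P : List (MFNArc F D), IsWalk s P t → (∀ a ∈ P, 0 < fc a) →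
        P.Nodup → (∀ a ∈ P.dropLast, a.head ≠ t) →
        ∃ m : MFNArc F D → ℝ,
          (∀ a, 0 ≤ m a) ∧
          (∀ v, netOutflow m v =
            (if s = v then (1:ℝ) else 0) - (if t = v then (1:ℝ) else 0)) ∧
          (∀ k, ¬ InDH I z xstar k → ∀ a : MFNArc F D,
            (a.tail = MFNNode.src k ∨ a.head = MFNNode.src k) → m a = 0) ∧
          (∀ j i, m (MFNArc.sx j i) ≤ cnt P (MFNArc.sx j i)) ∧
          (∀ i j, m (MFNArc.gs i j) ≤ cnt P (MFNArc.gs i j)) ∧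
          (∀ i, ¬(i ∈ I ∧ ¬ InIH I z xstar i) → m (MFNArc.mid i) ≤ cnt P (MFNArc.mid i)) ∧
          (∀ i j, j ≠ c → m (MFNArc.ft i j) = 0) ∧
          (∀ i, m (MFNArc.ft i c) ≤ 1) ∧
          (∀ i, i ∉ I → m (MFNArc.ft i c) ≤ cnt P (MFNArc.ft i c)) := by
      intro P hwalk hPpos hPnd hPdl
      have hPne : P ≠ [] := by
        intro h; subst h; exact hst hwalk.eq_of_nil
      have hcnt0 : ∀ (Q : List (MFNArc F D)) (a : MFNArc F D), a ∉ Q → cnt Q a = 0 := by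
        intro Q a ha; simp [cnt, List.count_eq_zero_of_not_mem ha]
      have hcntnn : ∀ (Q : List (MFNArc F D)) (a : MFNArc F D), (0:ℝ) ≤ cnt Q a := by
        intro Q a; simp [cnt]
      rcases first_bad_split Bad P with hnone | ⟨P₁, a, P₂, hPeq, hbad, hP₁⟩
      · -- untouched walk
        have htails := hwalk.tails_avoid Bad hnone hsnotbad
        have hnotinP : ∀ (k : D), ¬ InDH I z xstar k → ∀ b : MFNArc F D,
            (b.tail = MFNNode.src k ∨ b.head = MFNNode.src k) → b ∉ P := by
          intro k hk b hor hbP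
          rcases hor with h | h
          · exact htails b hbP ⟨k, hk, h⟩
          · exact hnone b hbP ⟨k, hk, h⟩
        refine ⟨cnt P, hcntnn P, netOutflow_cnt hwalk, ?_, fun j i => le_refl _,
          fun i j => le_refl _, fun i _ => le_refl _, ?_, ?_, fun i _ => le_refl _⟩
        · intro k hk b hor
          exact hcnt0 P b (hnotinP k hk b hor)
        · intro i j hj
          apply hcnt0 P
          intro hmem
          exact absurd (hft0 i j hj) (ne_of_gt (hPpos _ hmem))
        · intro i
          have hmem' : MFNArc.ft i c ∉ P.dropLast := by
            intro hmem
            exact hPdl _ hmem (by simp [MFNArc.head, ht])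
          have hPsplit := List.dropLast_append_getLast hPne
          rw [cnt, ← hPsplit, List.count_append]
          have h1 : (P.dropLast.count (MFNArc.ft i c)) = 0 :=
            List.count_eq_zero_of_not_mem hmem'
          have h2 : ([P.getLast hPne].count (MFNArc.ft i c)) ≤ 1 := by
            simp [List.count_singleton]
            split <;> simp
          push_cast [h1]
          simp only [zero_add]
          exact_mod_cast h2
      · -- rerouted walk
        obtain ⟨k, hk, hheadk⟩ := hbad
        -- identify the bad arc as a gs arc
        obtain ⟨i, rfl⟩ : ∃ i, a = MFNArc.gs i k := by
          cases a with
          | gs i' k' =>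
              simp only [MFNArc.head, MFNNode.src.injEq] at hheadk
              exact ⟨i', by rw [hheadk]⟩
          | mid i' => simp [MFNArc.head] at hheadk
          | sx j' i' => simp [MFNArc.head] at hheadk
          | ft i' j' => simp [MFNArc.head] at hheadk
        have haP : MFNArc.gs i k ∈ P := by rw [hPeq]; simp
        have hgik : 0 < gstar i k := by
          have h1 := hPpos _ haP
          have h2 := hcap (MFNArc.gs i k)
          simp only [mfnCap] at h2
          linarith
        obtain ⟨hiI, hiIH⟩ := hgpos i k hk hgik
        -- prefix walk
        have hwalk1 : IsWalk s P₁ (MFNNode.fac i) := by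
          rw [hPeq] at hwalk
          obtain ⟨m', h1, h2⟩ := hwalk.append_split
          cases h2 with
          | cons hb h3 =>
              have : (MFNArc.gs i k).tail = MFNNode.fac i := rfl
              rw [this] at hb
              rwa [hb]
        have hP₁sub : P₁.Sublist P := by rw [hPeq]; exact List.sublist_append_left _ _
        have hcnt_le : ∀ b, cnt P₁ b ≤ cnt P b := by
          intro b; simp only [cnt]; exact_mod_cast hP₁sub.count_le b
        have htails₁ := hwalk1.tails_avoid Bad hP₁ hsnotbad
        have hP₁dl : ∀ b ∈ P₁, b ∈ P.dropLast := by
          intro b hb; rw [hPeq]; exact mem_dropLast_append _ _ _ _ hb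
        have hftnotP₁ : ∀ i', MFNArc.ft i' c ∉ P₁ := by
          intro i' hmem
          exact hPdl _ (hP₁dl _ hmem) (by simp [MFNArc.head, ht])
        set m : MFNArc F D → ℝ := fun b => cnt P₁ b +
          ((if b = MFNArc.mid i then (1:ℝ) else 0) +
           (if b = MFNArc.ft i c then (1:ℝ) else 0)) with hm
        have hmnet : ∀ v, netOutflow m v =
            (if s = v then (1:ℝ) else 0) - (if t = v then (1:ℝ) else 0) := by
          intro v
          simp only [hm]
          rw [netOutflow_add (cnt P₁)
            (fun b => (if b = MFNArc.mid i then (1:ℝ) else 0) +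
              (if b = MFNArc.ft i c then (1:ℝ) else 0))]
          rw [netOutflow_add (fun b => if b = MFNArc.mid i then (1:ℝ) else 0)
            (fun b => if b = MFNArc.ft i c then (1:ℝ) else 0)]
          rw [netOutflow_cnt hwalk1, netOutflow_single, netOutflow_single]
          simp only [MFNArc.tail, MFNArc.head, ht]
          by_cases h1 : MFNNode.fac i = v <;> by_cases h2 : MFNNode.fac' i = v <;>
            by_cases h3 : s = v <;> by_cases h4 : MFNNode.sink c = v <;>
            simp only [h1, h2, h3, h4, eq_self_iff_true, ↓reduceIte] <;> ring
        refine ⟨m, ?_, hmnet, ?_, ?_, ?_, ?_, ?_, ?_, ?_⟩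
        · intro b
          simp only [hm]
          have := hcntnn P₁ b
          positivity
        · -- zero on bad arcs
          intro k' hk' b hor
          simp only [hm]
          have h1 : cnt P₁ b = 0 := by
            apply hcnt0 P₁
            · intro hbP₁
              rcases hor with h | h
              · exact htails₁ b hbP₁ ⟨k', hk', h⟩
              · exact hP₁ b hbP₁ ⟨k', hk', h⟩
          rcases eq_or_ne b (MFNArc.mid i) with hb | hb
          · exfalso; subst hb
            rcases hor with h | h <;> simp [MFNArc.tail, MFNArc.head] at h
          rcases eq_or_ne b (MFNArc.ft i c) with hb' | hb'
          · exfalso; subst hb'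
            rcases hor with h | h <;> simp [MFNArc.tail, MFNArc.head] at h
          rw [h1, if_neg hb, if_neg hb']; ring
        · -- sx bound
          intro j' i'
          simp only [hm]
          rw [if_neg (show MFNArc.sx j' i' ≠ MFNArc.mid i by simp),
            if_neg (show MFNArc.sx j' i' ≠ MFNArc.ft i c by simp)]
          simpa using hcnt_le (MFNArc.sx j' i')
        · -- gs bound
          intro i' j'
          simp only [hm]
          rw [if_neg (show MFNArc.gs i' j' ≠ MFNArc.mid i by simp),
            if_neg (show MFNArc.gs i' j' ≠ MFNArc.ft i c by simp)]
          simpa using hcnt_le (MFNArc.gs i' j')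
        · -- mid bound for non-good facilities
          intro i' hni
          simp only [hm]
          have hne : (MFNArc.mid i' : MFNArc F D) ≠ MFNArc.mid i := by
            intro hb
            simp only [MFNArc.mid.injEq] at hb
            subst hb
            exact hni ⟨hiI, hiIH⟩
          rw [if_neg hne, if_neg (show (MFNArc.mid i' : MFNArc F D) ≠ MFNArc.ft i c by simp)]
          simpa using hcnt_le (MFNArc.mid i')
        · -- foreign sinks
          intro i' j hj
          simp only [hm]
          have h1 : cnt P₁ (MFNArc.ft i' j) = 0 := by
            apply hcnt0 P₁
            intro hmem
            exact absurd (hft0 i' j hj) (ne_of_gt (hPpos _ (hP₁sub.subset hmem)))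
          rw [h1, if_neg (show MFNArc.ft i' j ≠ MFNArc.mid i by simp),
            if_neg (show MFNArc.ft i' j ≠ MFNArc.ft i c by simp [hj])]
          ring
        · -- own sink bounded by 1
          intro i'
          simp only [hm]
          have h1 : cnt P₁ (MFNArc.ft i' c) = 0 := hcnt0 P₁ _ (hftnotP₁ i')
          rw [h1, if_neg (show MFNArc.ft i' c ≠ MFNArc.mid i by simp)]
          split <;> norm_num
        · -- own sink, facility outside I
          intro i' hni
          simp only [hm]
          have h1 : cnt P₁ (MFNArc.ft i' c) = 0 := hcnt0 P₁ _ (hftnotP₁ i')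
          have hne : MFNArc.ft i' c ≠ MFNArc.ft i c := by
            intro hb
            simp only [MFNArc.ft.injEq] at hb
            exact hni (hb.1 ▸ hiI)
          rw [h1, if_neg (show MFNArc.ft i' c ≠ MFNArc.mid i by simp), if_neg hne]
          simpa using hcntnn P (MFNArc.ft i' c)
    -- combine all walks into the new commodity flow
    have combine : ∀ Lx : List (ℝ × List (MFNArc F D)),
        (∀ p ∈ Lx, 0 < p.1 ∧ IsWalk s p.2 t ∧ (∀ a ∈ p.2, 0 < fc a) ∧ p.2.Nodup ∧
          (∀ a ∈ p.2.dropLast, a.head ≠ t)) →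
        ∃ h : MFNArc F D → ℝ,
          (∀ a, 0 ≤ h a) ∧
          (∀ v, netOutflow h v = (Lx.map Prod.fst).sum *
            ((if s = v then (1:ℝ) else 0) - (if t = v then (1:ℝ) else 0))) ∧
          (∀ k, ¬ InDH I z xstar k → ∀ a : MFNArc F D,
            (a.tail = MFNNode.src k ∨ a.head = MFNNode.src k) → h a = 0) ∧
          (∀ j i, h (MFNArc.sx j i) ≤
            (Lx.map (fun p => p.1 * (p.2.count (MFNArc.sx j i) : ℝ))).sum) ∧
          (∀ i j, h (MFNArc.gs i j) ≤
            (Lx.map (fun p => p.1 * (p.2.count (MFNArc.gs i j) : ℝ))).sum) ∧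
          (∀ i, ¬(i ∈ I ∧ ¬ InIH I z xstar i) →
            h (MFNArc.mid i) ≤ (Lx.map (fun p => p.1 * (p.2.count (MFNArc.mid i) : ℝ))).sum) ∧
          (∀ i j, j ≠ c → h (MFNArc.ft i j) = 0) ∧
          (∀ i, h (MFNArc.ft i c) ≤ (Lx.map Prod.fst).sum) ∧
          (∀ i, i ∉ I → h (MFNArc.ft i c) ≤
            (Lx.map (fun p => p.1 * (p.2.count (MFNArc.ft i c) : ℝ))).sum) := by
      intro Lx
      induction Lx with
      | nil =>
          intro _
          exact ⟨fun _ => 0, fun a => le_refl 0, fun v => by rw [netOutflow_zero]; simp,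
            fun k _ a _ => rfl, by simp, by simp, by simp, fun i j _ => rfl, by simp, by simp⟩
      | cons p Lx ih =>
          intro hall
          obtain ⟨hw1, hw2, hw3, hw4, hw5⟩ := hall p (List.mem_cons_self)
          have hp1 : (0:ℝ) ≤ p.1 := le_of_lt hw1
          obtain ⟨m, hm0, hmnet, hmbad, hmsx, hmgs, hmmid, hmft, hmft1, hmftI⟩ :=
            walkmod p.2 hw2 hw3 hw4 hw5
          obtain ⟨h, hh0, hhnet, hhbad, hhsx, hhgs, hhmid, hhft, hhft1, hhftI⟩ :=
            ih (fun q hq => hall q (List.mem_cons_of_mem _ hq))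
          refine ⟨fun a => p.1 * m a + h a, ?_, ?_, ?_, ?_, ?_, ?_, ?_, ?_, ?_⟩
          · intro a
            exact add_nonneg (mul_nonneg hp1 (hm0 a)) (hh0 a)
          · intro v
            rw [netOutflow_add (fun a => p.1 * m a) h, netOutflow_const_mul p.1 m,
              hmnet v, hhnet v]
            simp only [List.map_cons, List.sum_cons]
            ring
          · intro k hk a hor
            show p.1 * m a + h a = 0
            rw [hmbad k hk a hor, hhbad k hk a hor]
            ring
          · intro j i
            simp only [List.map_cons, List.sum_cons]
            exact add_le_add (mul_le_mul_of_nonneg_left (hmsx j i) hp1) (hhsx j i)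
          · intro i j
            simp only [List.map_cons, List.sum_cons]
            exact add_le_add (mul_le_mul_of_nonneg_left (hmgs i j) hp1) (hhgs i j)
          · intro i hni
            simp only [List.map_cons, List.sum_cons]
            exact add_le_add (mul_le_mul_of_nonneg_left (hmmid i hni) hp1) (hhmid i hni)
          · intro i j hj
            show p.1 * m (MFNArc.ft i j) + h (MFNArc.ft i j) = 0
            rw [hmft i j hj, hhft i j hj]
            ring
          · intro i
            simp only [List.map_cons, List.sum_cons]
            have := mul_le_mul_of_nonneg_left (hmft1 i) hp1
            rw [mul_one] at this
            exact add_le_add this (hhft1 i)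
          · intro i hni
            simp only [List.map_cons, List.sum_cons]
            exact add_le_add (mul_le_mul_of_nonneg_left (hmftI i hni) hp1) (hhftI i hni)
    obtain ⟨h, hh0, hhnet, hhbad, hhsx, hhgs, hhmid, hhft, hhft1, hhftI⟩ := combine L hLw
    refine ⟨h, hh0, ?_, ?_, hhbad, ?_, ?_, ?_, hhft, ?_, ?_⟩
    · intro v hv1 hv2
      rw [hhnet v, if_neg (fun hh => hv1 (hh.symm.trans hs)),
        if_neg (fun hh => hv2 (hh.symm.trans ht))]
      ring
    · rw [hhnet s, if_pos rfl, if_neg (fun hh => hst hh.symm), hLs]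
      ring
    · intro j i
      exact le_trans (hhsx j i) (hLb _)
    · intro i j
      exact le_trans (hhgs i j) (hLb _)
    · intro i hni
      exact le_trans (hhmid i hni) (hLb _)
    · intro i
      exact le_trans (hhft1 i) (le_of_eq hLs)
    · intro i hni
      exact le_trans (hhftI i hni) (hLb _)

end PerCommodity
/-- If `MFN(g*, x*, y')` is feasible, there is a feasible flow in
which, for every client `k ∉ D_H`, all arcs incident to the node `k^s` carry zero flow
of every commodity. -/
theorem stmt_11
    (U : F → ℕ) (hU : ∀ i, 0 < U i)
    (xstar : F → D → ℝ) (ystar : F → ℝ)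
    (hxs : ∀ i j, 0 ≤ xstar i j ∧ xstar i j ≤ 1)
    (hys : ∀ i, 0 ≤ ystar i ∧ ystar i ≤ 1)
    (y' : F → ℝ) (hy' : ∀ i, y' i = if (1 / 4 : ℝ) ≤ ystar i then 1 else ystar i)
    (I : Finset F) (hI : ∀ i, i ∈ I ↔ y' i = 1)
    (z : F → D → ℝ)
    (hz0 : ∀ i j, 0 ≤ z i j)
    (hzx : ∀ i ∈ I, ∀ j, z i j ≤ 2 * xstar i j)
    (hzoff : ∀ i ∉ I, ∀ j, z i j = 0)
    (hz1 : ∀ j, ∑ i ∈ I, z i j ≤ 1)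
    (hzU : ∀ i ∈ I, ∑ j, z i j ≤ (U i : ℝ))
    (hzmax : ∀ z' : F → D → ℝ, (∀ i j, 0 ≤ z' i j) →
      (∀ i ∈ I, ∀ j, z' i j ≤ 2 * xstar i j) →
      (∀ j, ∑ i ∈ I, z' i j ≤ 1) → (∀ i ∈ I, ∑ j, z' i j ≤ (U i : ℝ)) →
      ∑ i ∈ I, ∑ j, z' i j ≤ ∑ i ∈ I, ∑ j, z i j)
    (gstar : F → D → ℝ)
    (hgstar : ∀ i j, gstar i j =
      if InIH I z xstar i then z i j
      else if i ∈ I ∧ ¬ InDH I z xstar j then z i j else 0)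
    (hfeas : MFNFeasible U gstar xstar y') :
    ∃ f : D → MFNArc F D → ℝ, IsFeasibleFlow U gstar xstar y' f ∧
      ∀ k : D, ¬ InDH I z xstar k → ∀ (j : D) (a : MFNArc F D),
        (MFNArc.tail a = MFNNode.src k ∨ MFNArc.head a = MFNNode.src k) →
        f j a = 0 := by
  classical
  -- membership in I_H implies membership in I
  have hIH_I : ∀ i, InIH I z xstar i → i ∈ I := by
    rintro i ⟨k, hk, hpath⟩
    rcases Relation.ReflTransGen.cases_tail hpath with h | ⟨b, _, hstep⟩
    · simp at h
    · cases b with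
      | inl i' => exact hstep.elim
      | inr j => exact hstep.1
  have hUnsatDH : ∀ j, Unsat I z j → InDH I z xstar j :=
    fun j hj => ⟨j, hj, Relation.ReflTransGen.refl⟩
  have hsat : ∀ j, ¬ InDH I z xstar j → ∑ i ∈ I, z i j = 1 := by
    intro j hj
    by_contra hne
    exact hj (hUnsatDH j hne)
  have hg_eq : ∀ j, ¬ InDH I z xstar j → ∀ i, gstar i j = if i ∈ I then z i j else 0 := by
    intro j hj i
    rw [hgstar i j]
    by_cases hIH : InIH I z xstar i
    · rw [if_pos hIH, if_pos (hIH_I i hIH)]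
    · rw [if_neg hIH]
      by_cases hiI : i ∈ I
      · rw [if_pos ⟨hiI, hj⟩, if_pos hiI]
      · rw [if_neg (fun hc => hiI hc.1), if_neg hiI]
  have hsum_gstar : ∀ j, ¬ InDH I z xstar j → ∑ i, gstar i j = 1 := by
    intro j hj
    rw [Finset.sum_congr rfl (fun i _ => hg_eq j hj i), Finset.sum_ite_mem,
      Finset.univ_inter]
    exact hsat j hj
  have hg_le : ∀ i j, gstar i j ≤ if i ∈ I then z i j else 0 := by
    intro i j
    rw [hgstar i j]
    by_cases hIH : InIH I z xstar i
    · rw [if_pos hIH, if_pos (hIH_I i hIH)]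
    · rw [if_neg hIH]
      by_cases hc : i ∈ I ∧ ¬ InDH I z xstar j
      · rw [if_pos hc, if_pos hc.1]
      · rw [if_neg hc]
        by_cases hiI : i ∈ I
        · rw [if_pos hiI]; exact hz0 i j
        · rw [if_neg hiI]
  have hdle : ∀ j, ∑ i, gstar i j ≤ 1 := by
    intro j
    calc ∑ i, gstar i j ≤ ∑ i, (if i ∈ I then z i j else 0) :=
          Finset.sum_le_sum (fun i _ => hg_le i j)
      _ = ∑ i ∈ I, z i j := by rw [Finset.sum_ite_mem, Finset.univ_inter]
      _ ≤ 1 := hz1 j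
  have hgpos : ∀ i k, ¬ InDH I z xstar k → 0 < gstar i k →
      i ∈ I ∧ ¬ InIH I z xstar i := by
    intro i k hk hpos
    rw [hgstar i k] at hpos
    by_cases hIH : InIH I z xstar i
    · exfalso
      rw [if_pos hIH] at hpos
      obtain ⟨u, hu, hp⟩ := hIH
      refine hk ⟨u, hu, hp.tail ?_⟩
      exact (⟨hIH_I i ⟨u, hu, hp⟩, hpos⟩ :
        HStep I z xstar (Sum.inl i) (Sum.inr k))
    · rw [if_neg hIH] at hpos
      by_cases hc : i ∈ I ∧ ¬ InDH I z xstar k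
      · exact ⟨hc.1, hIH⟩
      · rw [if_neg hc] at hpos; exact absurd hpos (lt_irrefl 0)
  have hxz : ∀ i, i ∈ I → ¬ InIH I z xstar i → ∀ j, InDH I z xstar j →
      xstar i j ≤ z i j := by
    intro i hiI hIH j hj
    by_contra hlt
    push_neg at hlt
    have h2 : z i j < 2 * xstar i j := by linarith [hz0 i j]
    obtain ⟨u, hu, hp⟩ := hj
    exact hIH ⟨u, hu, hp.tail
      (⟨hiI, h2⟩ : HStep I z xstar (Sum.inr j) (Sum.inl i))⟩
  have hmidcap : ∀ i, i ∈ I → ¬ InIH I z xstar i →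
      ∑ j, (if InDH I z xstar j then xstar i j else 0) + ∑ j, gstar i j ≤ (U i : ℝ) := by
    intro i hiI hIH
    have hpt : ∀ j, (if InDH I z xstar j then xstar i j else 0) + gstar i j ≤ z i j := by
      intro j
      by_cases hj : InDH I z xstar j
      · rw [if_pos hj]
        have hg0 : gstar i j = 0 := by
          rw [hgstar i j, if_neg hIH, if_neg (fun hc => hc.2 hj)]
        rw [hg0, add_zero]
        exact hxz i hiI hIH j hj
      · rw [if_neg hj, zero_add, hg_eq j hj i, if_pos hiI]
    calc ∑ j, (if InDH I z xstar j then xstar i j else 0) + ∑ j, gstar i j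
        = ∑ j, ((if InDH I z xstar j then xstar i j else 0) + gstar i j) := by
          rw [Finset.sum_add_distrib]
      _ ≤ ∑ j, z i j := Finset.sum_le_sum (fun j _ => hpt j)
      _ ≤ (U i : ℝ) := hzU i hiI
  -- take the feasible flow and clean each commodity
  obtain ⟨f, hf0, hfcons, hfnet, hfcap⟩ := hfeas
  have hcap1 : ∀ c a, f c a ≤ mfnCap U gstar xstar y' a := by
    intro c a
    calc f c a ≤ ∑ j, f j a :=
          Finset.single_le_sum (fun j _ => hf0 j a) (Finset.mem_univ c)
      _ ≤ _ := hfcap a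
  have hcDH : ∀ c, (1 - ∑ i, gstar i c) ≠ 0 → InDH I z xstar c := by
    intro c hne
    by_contra hc
    exact hne (by rw [hsum_gstar c hc]; ring)
  have hdc0 : ∀ c, 0 ≤ 1 - ∑ i, gstar i c := fun c => by linarith [hdle c]
  choose f' q1 q2 q3 q4 q5 q6 q7 q8 q9 q10 using
    fun c => per_commodity I z xstar gstar U y' hgpos c (hcDH c) (hdc0 c) (f c)
      (hf0 c) (fun v => hfcons c v) (hfnet c) (hcap1 c)
  refine ⟨f', ⟨q1, q2, q3, ?_⟩, fun k hk j a hor => q4 j k hk a hor⟩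
  intro a
  cases a with
  | mid i =>
      by_cases hGood : i ∈ I ∧ ¬ InIH I z xstar i
      · have hb : ∀ c, f' c (MFNArc.mid i) ≤ ∑ j, f' c (MFNArc.sx j i) := by
          intro c
          have hc0 := q2 c (MFNNode.fac i) (by simp) (by simp)
          unfold netOutflow at hc0
          have hin := sum_head_fac (f' c) i
          have hout : f' c (MFNArc.mid i) ≤
              ∑ b ∈ Finset.univ.filter
                (fun b : MFNArc F D => b.tail = MFNNode.fac i), f' c b := by
            apply Finset.single_le_sum (fun b _ => q1 c b)
            exact Finset.mem_filter.mpr ⟨Finset.mem_univ _, rfl⟩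
          linarith
        have hcol : ∀ j, ∑ c, f' c (MFNArc.sx j i) ≤
            (if InDH I z xstar j then xstar i j else 0) := by
          intro j
          by_cases hj : InDH I z xstar j
          · rw [if_pos hj]
            calc ∑ c, f' c (MFNArc.sx j i) ≤ ∑ c, f c (MFNArc.sx j i) :=
                  Finset.sum_le_sum (fun c _ => q5 c j i)
              _ ≤ mfnCap U gstar xstar y' (MFNArc.sx j i) := hfcap _
              _ = xstar i j := rfl
          · rw [if_neg hj, Finset.sum_eq_zero (fun c _ => q4 c j hj (MFNArc.sx j i) (Or.inl rfl))]
        have hyi : y' i = 1 := (hI i).mp hGood.1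
        calc ∑ c, f' c (MFNArc.mid i)
            ≤ ∑ c, ∑ j, f' c (MFNArc.sx j i) := Finset.sum_le_sum (fun c _ => hb c)
          _ = ∑ j, ∑ c, f' c (MFNArc.sx j i) := Finset.sum_comm
          _ ≤ ∑ j, (if InDH I z xstar j then xstar i j else 0) :=
              Finset.sum_le_sum (fun j _ => hcol j)
          _ ≤ (U i : ℝ) - ∑ j, gstar i j := by
              have := hmidcap i hGood.1 hGood.2
              linarith
          _ = mfnCap U gstar xstar y' (MFNArc.mid i) := by
              show _ = y' i * ((U i : ℝ) - ∑ j, gstar i j)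
              rw [hyi, one_mul]
      · calc ∑ c, f' c (MFNArc.mid i) ≤ ∑ c, f c (MFNArc.mid i) :=
              Finset.sum_le_sum (fun c _ => q7 c i hGood)
          _ ≤ _ := hfcap _
  | sx j i =>
      calc ∑ c, f' c (MFNArc.sx j i) ≤ ∑ c, f c (MFNArc.sx j i) :=
            Finset.sum_le_sum (fun c _ => q5 c j i)
        _ ≤ _ := hfcap _
  | gs i j =>
      calc ∑ c, f' c (MFNArc.gs i j) ≤ ∑ c, f c (MFNArc.gs i j) :=
            Finset.sum_le_sum (fun c _ => q6 c i j)
        _ ≤ _ := hfcap _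
  | ft i j =>
      have hsingle : ∑ c, f' c (MFNArc.ft i j) = f' j (MFNArc.ft i j) := by
        apply Finset.sum_eq_single j
        · intro c _ hcj
          exact q8 c i j (Ne.symm hcj)
        · intro hj
          exact absurd (Finset.mem_univ j) hj
      rw [hsingle]
      by_cases hiI : i ∈ I
      · have hyi : y' i = 1 := (hI i).mp hiI
        calc f' j (MFNArc.ft i j) ≤ 1 - ∑ i', gstar i' j := q9 j i
          _ = mfnCap U gstar xstar y' (MFNArc.ft i j) := by
              show _ = y' i * (1 - ∑ i', gstar i' j)
              rw [hyi, one_mul]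
      · calc f' j (MFNArc.ft i j) ≤ f j (MFNArc.ft i j) := q10 j i hiI
          _ ≤ mfnCap U gstar xstar y' (MFNArc.ft i j) := hcap1 j _
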